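/- Let m ∈ ℕ with m ≥ 2, let p_0, …, p_{2^m−1} ∈ [0,1) with ∑_{k=0}^{2^m−1} p_k = 1, let f_k(x) = (x+k)/2^m, and let μ be a Borel probability measure on [0,1] satisfying μ(B) = ∑_{k=0}^{2^m−1} p_k · μ(f_k^{-1}(B)) for every Borel set B ⊆ [0,1], with probability distribution function Φ(x) = μ([0,x]). Then the function φ : [0,1] → [0,1] defined by φ(x) = (1/m) · ∑_{i=0}^{m−1} ∑_{k=0}^{2^i−1} [Φ((x+k)/2^i) − Φ(k/2^i)] is increasing, continuous, satisfies φ(0) = 0 and φ(1) = 1, and satisfies φ(x) = φ(x/2) + φ((x+1)/2) − φ(1/2) for every x ∈ [0,1] (i.e. φ is a solution of the MW-problem). -/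

import Mathlib

open MeasureTheory Set Filter Topology

lemma stmt10_null_out {μ : Measure ℝ} [IsProbabilityMeasure μ] (hμ : μ (Icc (0:ℝ) 1) = 1)
    {s : Set ℝ} (hs : ∀ y ∈ s, y ∉ Icc (0:ℝ) 1) : μ s = 0 := by
  have hc : μ (Icc (0:ℝ) 1)ᶜ = 0 := by
    have h := measure_compl (measurableSet_Icc : MeasurableSet (Icc (0:ℝ) 1)) (measure_ne_top μ _)
    rw [hμ, measure_univ] at h
    simpa using h
  exact measure_mono_null (fun y hy => hs y hy) hc

lemma stmt10_atomless (m : ℕ) (hm : 1 ≤ m) (p : ℕ → ℝ)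
    (hp : ∀ k < 2 ^ m, p k ∈ Set.Ico (0:ℝ) 1)
    (hsum : ∑ k ∈ Finset.range (2 ^ m), p k = 1)
    (μ : Measure ℝ) [IsProbabilityMeasure μ] (hμ : μ (Set.Icc (0:ℝ) 1) = 1)
    (hinv : ∀ B ⊆ Set.Icc (0:ℝ) 1, MeasurableSet B →
      μ B = ∑ k ∈ Finset.range (2 ^ m),
        ENNReal.ofReal (p k) * μ ((fun x : ℝ => (x + k) / 2 ^ m) ⁻¹' B)) :
    ∀ x : ℝ, μ {x} = 0 := by
  by_contra h
  push_neg at h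
  obtain ⟨x₀, hx₀⟩ := h
  have hpow : (0:ℝ) < 2 ^ m := by positivity
  set ν : ℝ → ℝ := fun y => (μ {y}).toReal with hνdef
  have hout : ∀ y : ℝ, y ∉ Icc (0:ℝ) 1 → μ {y} = 0 := by
    intro y hy
    exact stmt10_null_out hμ (by simpa using hy)
  -- recursion for atoms
  have hpre : ∀ (k : ℕ) (x : ℝ), (fun y : ℝ => (y + k) / 2 ^ m) ⁻¹' {x} = {x * 2 ^ m - k} := by
    intro k x
    ext y
    simp only [mem_preimage, mem_singleton_iff]
    rw [div_eq_iff (ne_of_gt hpow)]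
    constructor <;> intro h <;> linarith
  have hrec : ∀ x ∈ Icc (0:ℝ) 1, ν x = ∑ k ∈ Finset.range (2 ^ m), p k * ν (x * 2 ^ m - k) := by
    intro x hx
    have h := hinv {x} (singleton_subset_iff.2 hx) (measurableSet_singleton x)
    simp only [hpre] at h
    have hne : ∀ k ∈ Finset.range (2 ^ m),
        ENNReal.ofReal (p k) * μ {x * 2 ^ m - (k:ℝ)} ≠ ⊤ :=
      fun k _ => ENNReal.mul_ne_top ENNReal.ofReal_ne_top (measure_ne_top μ _)
    calc ν x = (∑ k ∈ Finset.range (2 ^ m),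
        ENNReal.ofReal (p k) * μ {x * 2 ^ m - (k:ℝ)}).toReal := by rw [hνdef]; simp only; rw [← h]
    _ = ∑ k ∈ Finset.range (2 ^ m), p k * ν (x * 2 ^ m - k) := by
        rw [ENNReal.toReal_sum hne]
        refine Finset.sum_congr rfl fun k hk => ?_
        rw [ENNReal.toReal_mul, ENNReal.toReal_ofReal (hp k (Finset.mem_range.1 hk)).1]
  -- finite set of big atoms, maximum
  have hF : Set.Finite {y : ℝ | μ {x₀} ≤ μ {y}} := by
    refine Measure.finite_const_le_meas_of_disjoint_iUnion μ (pos_iff_ne_zero.2 hx₀)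
      (As := fun y : ℝ => {y}) (fun _ => measurableSet_singleton _) ?_ ?_
    · intro a b hab
      simp only [Function.onFun]
      exact disjoint_singleton.2 hab
    · exact ne_of_lt (lt_of_le_of_lt (measure_mono (subset_univ _)) (by simp))
  have hx₀F : x₀ ∈ {y : ℝ | μ {x₀} ≤ μ {y}} := by simp only [Set.mem_setOf_eq]; exact le_rfl
  obtain ⟨xm, hxmF, hxmmax⟩ := Set.Finite.exists_maximalFor ν _ hF ⟨x₀, hx₀F⟩
  have hmaxF : ∀ y ∈ {y : ℝ | μ {x₀} ≤ μ {y}}, ν y ≤ ν xm := by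
    intro y hy
    rcases le_or_gt (ν y) (ν xm) with h | h
    · exact h
    · exact hxmmax hy h.le
  have hglob : ∀ y, ν y ≤ ν xm := by
    intro y
    rcases le_or_gt (μ {x₀}) (μ {y}) with h | h
    · exact hmaxF y h
    · calc ν y ≤ ν x₀ := ENNReal.toReal_mono (measure_ne_top μ _) h.le
        _ ≤ ν xm := hmaxF x₀ hx₀F
  set s : ℝ := ν xm with hsdef
  have hspos : 0 < s :=
    lt_of_lt_of_le (ENNReal.toReal_pos hx₀ (measure_ne_top μ _)) (hmaxF x₀ hx₀F)
  set A : Set ℝ := {y : ℝ | ν y = s} with hAdef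
  have hAsub : A ⊆ {y : ℝ | μ {x₀} ≤ μ {y}} := by
    intro y hy
    have hy' : ν y = s := hy
    have h1 : ν x₀ ≤ ν y := by
      rw [hy']
      exact hmaxF x₀ hx₀F
    exact (ENNReal.toReal_le_toReal (measure_ne_top μ _) (measure_ne_top μ _)).1 h1
  have hAIcc : ∀ y ∈ A, y ∈ Icc (0:ℝ) 1 := by
    intro y hy
    by_contra hc
    have : ν y = 0 := by rw [hνdef]; simp [hout y hc]
    rw [hy] at this
    exact absurd this (ne_of_gt hspos)
  have hAfin : A.Finite := hF.subset hAsub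
  have hxmA : xm ∈ A := rfl
  -- step: images of A under expanding maps stay in A
  have hstep : ∀ k, k < 2 ^ m → 0 < p k → ∀ y ∈ A, y * 2 ^ m - k ∈ A := by
    intro k hk hpk y hyA
    have h1 : ν y = ∑ j ∈ Finset.range (2 ^ m), p j * ν (y * 2 ^ m - j) := hrec y (hAIcc y hyA)
    have hsum' : ∑ j ∈ Finset.range (2 ^ m), p j * s = s := by
      rw [← Finset.sum_mul, hsum, one_mul]
    by_contra hnot
    have hlt : ν (y * 2 ^ m - k) < s := lt_of_le_of_ne (hglob _) hnot
    have : ν y < s := by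
      rw [h1, ← hsum']
      refine Finset.sum_lt_sum (fun j hj => ?_) ⟨k, Finset.mem_range.2 hk, ?_⟩
      · exact mul_le_mul_of_nonneg_left (hglob _) (hp j (Finset.mem_range.1 hj)).1
      · exact mul_lt_mul_of_pos_left hlt hpk
    rw [hyA] at this
    exact absurd this (lt_irrefl s)
  -- two distinct positive weights
  have hexa : ∃ a ∈ Finset.range (2 ^ m), 0 < p a := by
    by_contra hc
    push_neg at hc
    have : ∑ k ∈ Finset.range (2 ^ m), p k ≤ 0 := Finset.sum_nonpos hc
    linarith
  obtain ⟨a, haR, hpa⟩ := hexa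
  have hexb : ∃ b ∈ (Finset.range (2 ^ m)).erase a, 0 < p b := by
    by_contra hc
    push_neg at hc
    have h1 : ∑ k ∈ (Finset.range (2 ^ m)).erase a, p k ≤ 0 := Finset.sum_nonpos hc
    have h2 : ∑ k ∈ (Finset.range (2 ^ m)).erase a, p k = 1 - p a := by
      rw [Finset.sum_erase_eq_sub haR, hsum]
    have := (hp a (Finset.mem_range.1 haR)).2
    linarith
  obtain ⟨b, hbE, hpb⟩ := hexb
  have hba : b ≠ a := Finset.ne_of_mem_erase hbE
  have hbR : b ∈ Finset.range (2 ^ m) := Finset.mem_of_mem_erase hbE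
  -- max/min argument
  obtain ⟨M, hMA, hMmax⟩ := Set.Finite.exists_maximalFor (fun y : ℝ => y) _ hAfin ⟨xm, hxmA⟩
  obtain ⟨m₀, hmA, hmmin⟩ := Set.Finite.exists_minimalFor (fun y : ℝ => y) _ hAfin ⟨xm, hxmA⟩
  have hMmax' : ∀ y ∈ A, y ≤ M := by
    intro y hy
    rcases le_or_gt y M with h | h
    · exact h
    · exact hMmax hy h.le
  have hmmin' : ∀ y ∈ A, m₀ ≤ y := by
    intro y hy
    rcases le_or_gt m₀ y with h | h
    · exact h
    · exact hmmin hy h.le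
  have key : ∀ k, k < 2 ^ m → 0 < p k → (k : ℝ) = M * (2 ^ m - 1) := by
    intro k hk hpk
    have h1 : M * 2 ^ m - k ≤ M := hMmax' _ (hstep k hk hpk M hMA)
    have h2 : m₀ ≤ m₀ * 2 ^ m - k := hmmin' _ (hstep k hk hpk m₀ hmA)
    have h3 : m₀ ≤ M := hmmin' M hMA
    have hc : (0:ℝ) ≤ 2 ^ m - 1 := by
      have : (1:ℝ) ≤ 2 ^ m := one_le_pow₀ (by norm_num)
      linarith
    nlinarith
  have hA : (a : ℝ) = (b : ℝ) := by
    rw [key a (Finset.mem_range.1 haR) hpa, key b (Finset.mem_range.1 hbR) hpb]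
  exact hba (Nat.cast_injective hA.symm)


lemma stmt10_cont {μ : Measure ℝ} [IsProbabilityMeasure μ]
    (hat : ∀ x : ℝ, μ {x} = 0) : Continuous fun x : ℝ => (μ (Icc 0 x)).toReal := by
  set Φ : ℝ → ℝ := fun x => (μ (Icc 0 x)).toReal with hΦdef
  have hmono : Monotone Φ := fun x y hxy =>
    ENNReal.toReal_mono (measure_ne_top μ _) (measure_mono (Icc_subset_Icc le_rfl hxy))
  have h0 : ∀ x, 0 ≤ Φ x := fun x => ENNReal.toReal_nonneg
  have h1 : ∀ x, Φ x ≤ 1 := by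
    intro x
    have h := ENNReal.toReal_mono (measure_ne_top μ univ) (measure_mono (subset_univ (Icc 0 x)))
    simpa using h
  rw [continuous_iff_continuousAt]
  intro x
  rw [continuousAt_iff_continuous_left'_right']
  constructor
  · -- left continuity
    have hseq : Tendsto (fun n : ℕ => Φ (x - 1 / (n + 1))) atTop (𝓝 (Φ x)) := by
      have hm0 : Monotone fun n : ℕ => Icc (0:ℝ) (x - 1 / (n + 1)) := by
        intro i j hij
        apply Icc_subset_Icc le_rfl
        have h1 : (1:ℝ) / (j + 1) ≤ 1 / (i + 1) := by
          apply one_div_le_one_div_of_le (by positivity)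
          exact_mod_cast add_le_add_left (Nat.cast_le.2 hij) 1
        linarith
      have h2 := tendsto_measure_iUnion_atTop (μ := μ) hm0
      have hU : (⋃ n : ℕ, Icc (0:ℝ) (x - 1 / (n + 1))) = Ico 0 x := by
        ext y
        simp only [mem_iUnion, mem_Icc, mem_Ico]
        constructor
        · rintro ⟨n, h0n, h1n⟩
          refine ⟨h0n, lt_of_le_of_lt h1n ?_⟩
          have : (0:ℝ) < 1 / (n + 1) := by positivity
          linarith
        · rintro ⟨h0y, h1y⟩
          obtain ⟨n, hn⟩ := exists_nat_one_div_lt (sub_pos.2 h1y)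
          exact ⟨n, h0y, by linarith⟩
      have hIco : μ (Ico (0:ℝ) x) = μ (Icc 0 x) := by
        apply le_antisymm (measure_mono Ico_subset_Icc_self)
        calc μ (Icc (0:ℝ) x) ≤ μ (Ico 0 x ∪ {x}) := by
              apply measure_mono
              intro y hy
              rcases lt_or_eq_of_le hy.2 with h | h
              · exact Or.inl ⟨hy.1, h⟩
              · exact Or.inr h
          _ ≤ μ (Ico 0 x) + μ {x} := measure_union_le _ _
          _ = μ (Ico 0 x) := by rw [hat x, add_zero]
      rw [hU, hIco] at h2
      exact (ENNReal.tendsto_toReal (measure_ne_top μ _)).comp h2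
    have hL := hmono.tendsto_nhdsLT x
    have hsup : sSup (Φ '' Iio x) = Φ x := by
      apply le_antisymm
      · apply csSup_le ((nonempty_Iio).image Φ)
        rintro _ ⟨y, hy, rfl⟩
        exact hmono (le_of_lt hy)
      · refine le_of_tendsto hseq (Eventually.of_forall fun n => ?_)
        apply le_csSup
        · exact ⟨1, by rintro _ ⟨y, _, rfl⟩; exact h1 y⟩
        · exact mem_image_of_mem Φ (by simp only [mem_Iio]; exact sub_lt_self x (by positivity))
    rw [hsup] at hL
    exact hL
  · -- right continuity
    have hseq : Tendsto (fun n : ℕ => Φ (x + 1 / (n + 1))) atTop (𝓝 (Φ x)) := by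
      have hm0 : Antitone fun n : ℕ => Icc (0:ℝ) (x + 1 / (n + 1)) := by
        intro i j hij
        apply Icc_subset_Icc le_rfl
        have h1 : (1:ℝ) / (j + 1) ≤ 1 / (i + 1) := by
          apply one_div_le_one_div_of_le (by positivity)
          exact_mod_cast add_le_add_left (Nat.cast_le.2 hij) 1
        linarith
      have h2 := tendsto_measure_iInter_atTop (μ := μ)
        (fun n => measurableSet_Icc.nullMeasurableSet) hm0 ⟨0, measure_ne_top μ _⟩
      have hU : (⋂ n : ℕ, Icc (0:ℝ) (x + 1 / (n + 1))) = Icc 0 x := by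
        ext y
        simp only [mem_iInter, mem_Icc]
        constructor
        · intro h
          refine ⟨(h 0).1, ?_⟩
          apply le_of_forall_pos_le_add
          intro ε hε
          obtain ⟨n, hn⟩ := exists_nat_one_div_lt hε
          exact le_trans (h n).2 (by linarith)
        · rintro ⟨h0y, h1y⟩ n
          have : (0:ℝ) < 1 / (n + 1) := by positivity
          exact ⟨h0y, by linarith⟩
      rw [hU] at h2
      exact (ENNReal.tendsto_toReal (measure_ne_top μ _)).comp h2
    have hR := hmono.tendsto_nhdsGT x
    have hinf : sInf (Φ '' Ioi x) = Φ x := by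
      apply le_antisymm
      · refine ge_of_tendsto hseq (Eventually.of_forall fun n => ?_)
        apply csInf_le
        · exact ⟨0, by rintro _ ⟨y, _, rfl⟩; exact h0 y⟩
        · exact mem_image_of_mem Φ (by simp only [mem_Ioi]; exact lt_add_of_pos_right x (by positivity))
      · apply le_csInf ((nonempty_Ioi).image Φ)
        rintro _ ⟨y, hy, rfl⟩
        exact hmono (le_of_lt hy)
    rw [hinf] at hR
    exact hR


lemma stmt10_null_out' {μ : Measure ℝ} [IsProbabilityMeasure μ] (hμ : μ (Icc (0:ℝ) 1) = 1)
    {s : Set ℝ} (hs : ∀ y ∈ s, y ∉ Icc (0:ℝ) 1) : μ s = 0 := by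
  have hc : μ (Icc (0:ℝ) 1)ᶜ = 0 := by
    have h := measure_compl (measurableSet_Icc : MeasurableSet (Icc (0:ℝ) 1)) (measure_ne_top μ _)
    rw [hμ, measure_univ] at h
    simpa using h
  exact measure_mono_null (fun y hy => hs y hy) hc

lemma stmt10_key (m : ℕ) (p : ℕ → ℝ)
    (hp : ∀ k < 2 ^ m, p k ∈ Set.Ico (0:ℝ) 1)
    (μ : Measure ℝ) [IsProbabilityMeasure μ] (hμ : μ (Set.Icc (0:ℝ) 1) = 1)
    (hinv : ∀ B ⊆ Set.Icc (0:ℝ) 1, MeasurableSet B →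
      μ B = ∑ k ∈ Finset.range (2 ^ m),
        ENNReal.ofReal (p k) * μ ((fun x : ℝ => (x + k) / 2 ^ m) ⁻¹' B))
    (hat : ∀ x : ℝ, μ {x} = 0)
    {x : ℝ} (hx : x ∈ Icc (0:ℝ) 1) {k : ℕ} (hk : k < 2 ^ m) :
    (μ (Icc (0:ℝ) ((x + k) / 2 ^ m))).toReal - (μ (Icc (0:ℝ) ((k:ℝ) / 2 ^ m))).toReal
      = p k * (μ (Icc (0:ℝ) x)).toReal := by
  have hpow : (0:ℝ) < 2 ^ m := by positivity
  set a : ℝ := (k:ℝ) / 2 ^ m with hadef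
  set b : ℝ := (x + k) / 2 ^ m with hbdef
  have hk1 : (k:ℝ) + 1 ≤ 2 ^ m := by
    have : (k + 1 : ℕ) ≤ 2 ^ m := hk
    exact_mod_cast this
  have ha0 : 0 ≤ a := by positivity
  have hab : a ≤ b := by
    rw [hadef, hbdef]
    gcongr
    linarith [hx.1]
  have hb1 : b ≤ 1 := by
    rw [hbdef, div_le_one hpow]
    linarith [hx.2]
  have hBsub : Icc a b ⊆ Icc (0:ℝ) 1 := Icc_subset_Icc ha0 hb1
  have hpre : ∀ j : ℕ, (fun y : ℝ => (y + j) / 2 ^ m) ⁻¹' Icc a b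
      = Icc ((k:ℝ) - j) (x + k - j) := by
    intro j
    ext y
    simp only [mem_preimage, mem_Icc]
    constructor
    · rintro ⟨h1, h2⟩
      have h1' : a * 2 ^ m ≤ y + j := (le_div_iff₀ hpow).1 h1
      have h2' : y + j ≤ b * 2 ^ m := (div_le_iff₀ hpow).1 h2
      rw [hadef, div_mul_cancel₀ _ (ne_of_gt hpow)] at h1'
      rw [hbdef, div_mul_cancel₀ _ (ne_of_gt hpow)] at h2'
      constructor <;> linarith
    · rintro ⟨h1, h2⟩
      constructor
      · rw [le_div_iff₀ hpow, hadef, div_mul_cancel₀ _ (ne_of_gt hpow)]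
        linarith
      · rw [div_le_iff₀ hpow, hbdef, div_mul_cancel₀ _ (ne_of_gt hpow)]
        linarith
  have hzero : ∀ j ∈ Finset.range (2 ^ m), j ≠ k → μ (Icc ((k:ℝ) - j) (x + k - j)) = 0 := by
    intro j _ hjk
    rcases Nat.lt_or_ge j k with hjlt | hjge
    · -- j < k : the interval lies in [1, ∞)
      have h1 : (1:ℝ) ≤ (k:ℝ) - j := by
        have : (j + 1 : ℕ) ≤ k := hjlt
        have := (Nat.cast_le (α := ℝ)).2 this
        push_cast at this
        linarith
      have hsub : Icc ((k:ℝ) - j) (x + k - j) ⊆ {(1:ℝ)} ∪ (Icc (0:ℝ) 1)ᶜ := by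
        intro y hy
        by_cases hyI : y ∈ Icc (0:ℝ) 1
        · left
          have := hy.1
          have := hyI.2
          simp only [mem_singleton_iff]
          linarith
        · exact Or.inr hyI
      refine le_antisymm ?_ zero_le
      calc μ (Icc ((k:ℝ) - j) (x + k - j)) ≤ μ ({(1:ℝ)} ∪ (Icc (0:ℝ) 1)ᶜ) := measure_mono hsub
        _ ≤ μ {(1:ℝ)} + μ (Icc (0:ℝ) 1)ᶜ := measure_union_le _ _
        _ = 0 := by
            rw [hat 1]
            have h := measure_compl (measurableSet_Icc : MeasurableSet (Icc (0:ℝ) 1))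
              (measure_ne_top μ _)
            rw [hμ, measure_univ] at h
            simp [h]
    · -- j > k : the interval lies in (-∞, 0]
      have hjgt : k < j := lt_of_le_of_ne hjge (Ne.symm (by exact_mod_cast hjk))
      have h1 : x + (k:ℝ) - j ≤ 0 := by
        have : (k + 1 : ℕ) ≤ j := hjgt
        have := (Nat.cast_le (α := ℝ)).2 this
        push_cast at this
        linarith [hx.2]
      have hsub : Icc ((k:ℝ) - j) (x + k - j) ⊆ {(0:ℝ)} ∪ (Icc (0:ℝ) 1)ᶜ := by
        intro y hy
        by_cases hyI : y ∈ Icc (0:ℝ) 1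
        · left
          have := hy.2
          have := hyI.1
          simp only [mem_singleton_iff]
          linarith
        · exact Or.inr hyI
      refine le_antisymm ?_ zero_le
      calc μ (Icc ((k:ℝ) - j) (x + k - j)) ≤ μ ({(0:ℝ)} ∪ (Icc (0:ℝ) 1)ᶜ) := measure_mono hsub
        _ ≤ μ {(0:ℝ)} + μ (Icc (0:ℝ) 1)ᶜ := measure_union_le _ _
        _ = 0 := by
            rw [hat 0]
            have h := measure_compl (measurableSet_Icc : MeasurableSet (Icc (0:ℝ) 1))
              (measure_ne_top μ _)
            rw [hμ, measure_univ] at h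
            simp [h]
  have hBval : μ (Icc a b) = ENNReal.ofReal (p k) * μ (Icc 0 x) := by
    rw [hinv (Icc a b) hBsub measurableSet_Icc]
    rw [Finset.sum_eq_single_of_mem k (Finset.mem_range.2 hk)]
    · rw [hpre k]
      have he : Icc ((k:ℝ) - k) (x + k - k) = Icc (0:ℝ) x := by
        congr 1 <;> ring
      rw [he]
    · intro j hj hjk
      rw [hpre j, hzero j hj hjk, mul_zero]
  -- decompose Icc 0 b
  have hIoc : μ (Ioc a b) = μ (Icc a b) := by
    apply le_antisymm (measure_mono Ioc_subset_Icc_self)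
    calc μ (Icc a b) ≤ μ ({a} ∪ Ioc a b) := by
          apply measure_mono
          intro y hy
          rcases eq_or_lt_of_le hy.1 with h | h
          · exact Or.inl h.symm
          · exact Or.inr ⟨h, hy.2⟩
      _ ≤ μ {a} + μ (Ioc a b) := measure_union_le _ _
      _ = μ (Ioc a b) := by rw [hat a, zero_add]
  have hsplit : μ (Icc 0 b) = μ (Icc 0 a) + ENNReal.ofReal (p k) * μ (Icc 0 x) := by
    rw [← Icc_union_Ioc_eq_Icc ha0 hab]
    rw [measure_union ?_ measurableSet_Ioc]
    · rw [hIoc, hBval]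
    · rw [Set.disjoint_left]
      rintro y ⟨_, hy2⟩ ⟨hy3, _⟩
      exact absurd hy2 (not_le.2 hy3)
  rw [hsplit, ENNReal.toReal_add (measure_ne_top μ _)
    (ENNReal.mul_ne_top ENNReal.ofReal_ne_top (measure_ne_top μ _))]
  rw [ENNReal.toReal_mul, ENNReal.toReal_ofReal (hp k hk).1]
  ring


lemma stmt10_sum_double {M : Type*} [AddCommMonoid M] (n : ℕ) (g : ℕ → M) :
    ∑ j ∈ Finset.range (2 * n), g j = ∑ k ∈ Finset.range n, (g (2 * k) + g (2 * k + 1)) := by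
  induction n with
  | zero => simp
  | succ n ih =>
      have h2 : 2 * (n + 1) = (2 * n + 1) + 1 := by ring
      rw [h2, Finset.sum_range_succ, Finset.sum_range_succ, ih, Finset.sum_range_succ, add_assoc]

section Assembly


/-- For `m ≥ 2` and an invariant measure `μ` of the IFS `f_k(x) = (x+k)/2^m`
with probabilities `p_k ∈ [0,1)` summing to `1`, the function
`φ(x) = (1/m) ∑_{i=0}^{m−1} ∑_{k=0}^{2^i−1} [Φ((x+k)/2^i) − Φ(k/2^i)]`
is a solution of the MW-problem. -/
theorem stmt_10 (m : ℕ) (hm : 2 ≤ m) (p : ℕ → ℝ)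
    (hp : ∀ k < 2 ^ m, p k ∈ Set.Ico (0:ℝ) 1)
    (hsum : ∑ k ∈ Finset.range (2 ^ m), p k = 1)
    (μ : Measure ℝ) [IsProbabilityMeasure μ] (hμ : μ (Set.Icc (0:ℝ) 1) = 1)
    (hinv : ∀ B ⊆ Set.Icc (0:ℝ) 1, MeasurableSet B →
      μ B = ∑ k ∈ Finset.range (2 ^ m),
        ENNReal.ofReal (p k) * μ ((fun x : ℝ => (x + k) / 2 ^ m) ⁻¹' B))
    (Φ : ℝ → ℝ) (hΦ : ∀ x, Φ x = (μ (Set.Icc 0 x)).toReal)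
    (φ : ℝ → ℝ)
    (hφ : ∀ x, φ x = (1 / m : ℝ) * ∑ i ∈ Finset.range m, ∑ k ∈ Finset.range (2 ^ i),
      (Φ ((x + k) / 2 ^ i) - Φ (k / 2 ^ i))) :
    Set.MapsTo φ (Set.Icc (0:ℝ) 1) (Set.Icc (0:ℝ) 1) ∧
    MonotoneOn φ (Set.Icc (0:ℝ) 1) ∧
    ContinuousOn φ (Set.Icc (0:ℝ) 1) ∧
    φ 0 = 0 ∧ φ 1 = 1 ∧
    ∀ x ∈ Set.Icc (0:ℝ) 1, φ x = φ (x / 2) + φ ((x + 1) / 2) - φ (1 / 2) := by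
  have hm1 : 1 ≤ m := le_trans (by norm_num) hm
  have hmR : (0:ℝ) < m := by exact_mod_cast Nat.lt_of_lt_of_le (by norm_num) hm
  have hat : ∀ x : ℝ, μ {x} = 0 := stmt10_atomless m hm1 p hp hsum μ hμ hinv
  have hΦmono : Monotone Φ := by
    intro x y hxy
    rw [hΦ x, hΦ y]
    exact ENNReal.toReal_mono (measure_ne_top μ _) (measure_mono (Icc_subset_Icc le_rfl hxy))
  have hΦcont : Continuous Φ := by
    have he : Φ = fun x => (μ (Icc 0 x)).toReal := funext hΦ
    rw [he]
    exact stmt10_cont hat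
  have hΦ0 : Φ 0 = 0 := by
    rw [hΦ]
    simp [Icc_self, hat 0]
  have hΦ1 : Φ 1 = 1 := by
    rw [hΦ, hμ]
    simp
  have key : ∀ x ∈ Icc (0:ℝ) 1, ∀ k : ℕ, k < 2 ^ m →
      Φ ((x + k) / 2 ^ m) - Φ ((k:ℝ) / 2 ^ m) = p k * Φ x := by
    intro x hx k hk
    rw [hΦ, hΦ, hΦ]
    exact stmt10_key m p hp μ hμ hinv hat hx hk
  -- continuity of φ
  have hφcont : Continuous φ := by
    have he : φ = fun x => (1 / m : ℝ) * ∑ i ∈ Finset.range m, ∑ k ∈ Finset.range (2 ^ i),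
        (Φ ((x + k) / 2 ^ i) - Φ (k / 2 ^ i)) := funext hφ
    rw [he]
    refine continuous_const.mul ?_
    refine continuous_finset_sum _ fun i _ => continuous_finset_sum _ fun k _ => ?_
    exact (hΦcont.comp (by continuity)).sub continuous_const
  -- monotonicity of φ
  have hφmono : Monotone φ := by
    intro x y hxy
    rw [hφ x, hφ y]
    have hm0 : (0:ℝ) ≤ 1 / m := by positivity
    apply mul_le_mul_of_nonneg_left ?_ hm0
    apply Finset.sum_le_sum
    intro i _
    apply Finset.sum_le_sum
    intro k _
    have h := hΦmono (show (x + k) / 2 ^ i ≤ (y + k) / 2 ^ i by gcongr)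
    linarith
  set S : ℕ → ℝ → ℝ := fun i x => ∑ k ∈ Finset.range (2 ^ i),
    (Φ ((x + k) / 2 ^ i) - Φ ((k:ℝ) / 2 ^ i)) with hSdef
  have hS0 : ∀ x : ℝ, S 0 x = Φ x := by
    intro x
    simp [hSdef, hΦ0]
  have hSm : ∀ x ∈ Icc (0:ℝ) 1, S m x = Φ x := by
    intro x hx
    simp only [hSdef]
    rw [Finset.sum_congr rfl (fun k hk => key x hx k (Finset.mem_range.1 hk))]
    rw [← Finset.sum_mul, hsum, one_mul]
  have hS1 : ∀ i, S i 1 = 1 := by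
    intro i
    have h := Finset.sum_range_sub (fun k : ℕ => Φ ((k:ℝ) / 2 ^ i)) (2 ^ i)
    simp only [hSdef]
    calc ∑ k ∈ Finset.range (2 ^ i), (Φ ((1 + (k:ℝ)) / 2 ^ i) - Φ ((k:ℝ) / 2 ^ i))
        = ∑ k ∈ Finset.range (2 ^ i),
            (Φ ((((k + 1 : ℕ)):ℝ) / 2 ^ i) - Φ ((k:ℝ) / 2 ^ i)) := by
          refine Finset.sum_congr rfl fun k _ => ?_
          push_cast
          rw [add_comm (1:ℝ) (k:ℝ)]
      _ = Φ ((((2 ^ i : ℕ)):ℝ) / 2 ^ i) - Φ (((0:ℕ):ℝ) / 2 ^ i) := h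
      _ = 1 := by
          push_cast
          rw [div_self (by positivity : ((2:ℝ) ^ i) ≠ 0)]
          simp [hΦ0, hΦ1]
  have hT : ∀ (i : ℕ) (x : ℝ), S i (x / 2) + S i ((x + 1) / 2) - S i (1 / 2) = S (i + 1) x := by
    intro i x
    have h2 : 2 ^ (i + 1) = 2 * 2 ^ i := by ring
    simp only [hSdef]
    rw [h2, stmt10_sum_double]
    rw [← Finset.sum_add_distrib, ← Finset.sum_sub_distrib]
    refine Finset.sum_congr rfl fun k _ => ?_
    have e1 : (x / 2 + (k:ℝ)) / 2 ^ i = (x + ((2 * k : ℕ):ℝ)) / 2 ^ (i + 1) := by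
      push_cast
      rw [pow_succ]
      field_simp
    have e2 : ((x + 1) / 2 + (k:ℝ)) / 2 ^ i = (x + ((2 * k + 1 : ℕ):ℝ)) / 2 ^ (i + 1) := by
      push_cast
      rw [pow_succ]
      field_simp
      ring
    have e3 : ((1:ℝ) / 2 + (k:ℝ)) / 2 ^ i = (((2 * k + 1 : ℕ)):ℝ) / 2 ^ (i + 1) := by
      push_cast
      rw [pow_succ]
      field_simp
      ring
    have e4 : ((k:ℝ)) / 2 ^ i = (((2 * k : ℕ)):ℝ) / 2 ^ (i + 1) := by
      push_cast
      rw [pow_succ]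
      field_simp
    rw [e1, e2, e3, e4]
    ring
  have hφ0 : φ 0 = 0 := by
    rw [hφ]
    simp
  have hφ1 : φ 1 = 1 := by
    have h := hφ 1
    rw [h, Finset.sum_congr rfl (fun i _ => hS1 i)]
    simp only [Finset.sum_const, Finset.card_range, nsmul_eq_mul, mul_one]
    field_simp
  refine ⟨?_, hφmono.monotoneOn _, hφcont.continuousOn, hφ0, hφ1, ?_⟩
  · intro x hx
    constructor
    · rw [← hφ0]; exact hφmono hx.1
    · rw [← hφ1]; exact hφmono hx.2
  · intro x hx
    have h1 : φ (x / 2) + φ ((x + 1) / 2) - φ (1 / 2)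
        = (1 / m : ℝ) * ∑ i ∈ Finset.range m, S (i + 1) x := by
      rw [hφ, hφ, hφ, ← mul_add, ← mul_sub]
      congr 1
      rw [← Finset.sum_add_distrib, ← Finset.sum_sub_distrib]
      exact Finset.sum_congr rfl fun i _ => hT i x
    have h3 := Finset.sum_range_succ' (fun i => S i x) m
    have h4 := Finset.sum_range_succ (fun i => S i x) m
    have h5 : S m x = S 0 x := by rw [hSm x hx, hS0 x]
    have h2 : ∑ i ∈ Finset.range m, S (i + 1) x = ∑ i ∈ Finset.range m, S i x := by
      rw [h5] at h4
      linarith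
    rw [h1, h2, ← hφ x]
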